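/- Let X be a non-empty Polish space and let h be a fixed gauge function. Then the set of compact subsets K of X with Hausdorff measure H^h(K) = 0 is comeager in the hyperspace K(X) of non-empty compact subsets of X with the Hausdorff metric. -/

import Mathlib

open MeasureTheory Filter Set TopologicalSpace
open scoped ENNReal NNReal

/-- A gauge function: non-decreasing, right-continuous, vanishing exactly at `0`. -/
def IsGauge (h : ENNReal → ENNReal) : Prop :=
  Monotone h ∧ (∀ x, h x = 0 ↔ x = 0) ∧
    ∀ x : ENNReal, Tendsto h (nhdsWithin x (Set.Ioi x)) (nhds (h x))

/-- For a fixed gauge function `h`, the generic non-empty compact subset `K` of a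
non-empty Polish space `X` satisfies `ℋ^h(K) = 0`. -/
theorem generic_compact_null_for_fixed_gauge
    {X : Type*} [MetricSpace X] [Nonempty X] [CompleteSpace X] [SeparableSpace X]
    [MeasurableSpace X] [BorelSpace X]
    (h : ENNReal → ENNReal) (hh : IsGauge h) :
    {K : NonemptyCompacts X | Measure.mkMetric h (K : Set X) = 0} ∈
      residual (NonemptyCompacts X) := by
  classical
  obtain ⟨hmono, hzero, hrc⟩ := hh
  set U : ℕ → Set (NonemptyCompacts X) := fun n =>
    {K | ∃ (F : Finset X) (r : ℝ≥0∞), 0 < r ∧ 2 * r ≤ ((n : ℝ≥0∞) + 1)⁻¹ ∧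
      (F.card : ℝ≥0∞) * h (2 * r) ≤ ((n : ℝ≥0∞) + 1)⁻¹ ∧
      (K : Set X) ⊆ ⋃ x ∈ F, EMetric.ball x r} with hU
  have hopen : ∀ n, IsOpen (U n) := by
    intro n
    rw [EMetric.isOpen_iff]
    rintro K ⟨F, r, hr, h2r, hcard, hcover⟩
    have hV : IsOpen (⋃ x ∈ F, EMetric.ball x r) :=
      isOpen_biUnion fun _ _ => EMetric.isOpen_ball
    obtain ⟨δ, hδ, hth⟩ := K.isCompact.exists_thickening_subset_open hV hcover
    refine ⟨ENNReal.ofReal δ, by simpa using hδ, fun K' hK' =>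
      ⟨F, r, hr, h2r, hcard, fun y hy => ?_⟩⟩
    have hKK' : EMetric.hausdorffEdist (K' : Set X) (K : Set X) < ENNReal.ofReal δ := hK'
    have : EMetric.infEdist y (K : Set X) < ENNReal.ofReal δ :=
      lt_of_le_of_lt (EMetric.infEdist_le_hausdorffEdist_of_mem hy) hKK'
    exact hth (Metric.mem_thickening_iff_infEdist_lt.2 this)
  have hdense : ∀ n, Dense (U n) := by
    intro n
    intro K
    rw [EMetric.mem_closure_iff]
    intro ε hε
    set ε0 : ℝ≥0∞ := min ε 1 / 2 with hε0def
    have hmin : (0 : ℝ≥0∞) < min ε 1 := lt_min hε zero_lt_one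
    have hε0 : 0 < ε0 := ENNReal.half_pos hmin.ne'
    have hε0' : ε0 < ε :=
      lt_of_lt_of_le (ENNReal.half_lt_self hmin.ne'
        (lt_of_le_of_lt (min_le_right _ _) ENNReal.one_lt_top).ne) (min_le_left _ _)
    obtain ⟨F0, hF0K, hF0fin, hF0cov⟩ :=
      EMetric.totallyBounded_iff'.1 K.isCompact.totallyBounded ε0 hε0
    have hne : F0.Nonempty := by
      obtain ⟨y, hy⟩ := K.nonempty
      obtain ⟨x, hx, -⟩ := Set.mem_iUnion₂.1 (hF0cov hy)
      exact ⟨x, hx⟩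
    set F : Finset X := hF0fin.toFinset with hF
    have hFcard : (F.card : ℝ≥0∞) ≠ 0 := by
      simp only [Ne, Nat.cast_eq_zero, Finset.card_eq_zero]
      intro hFe
      obtain ⟨x, hx⟩ := hne
      have : x ∈ F := hF0fin.mem_toFinset.2 hx
      simp [hFe] at this
    have hFtop : (F.card : ℝ≥0∞) ≠ ⊤ := ENNReal.natCast_ne_top _
    set c : ℝ≥0∞ := ((n : ℝ≥0∞) + 1)⁻¹ / F.card with hc
    have hinvne : ((n : ℝ≥0∞) + 1)⁻¹ ≠ 0 := ENNReal.inv_ne_zero.2 (by simp)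
    have hcpos : 0 < c := ENNReal.div_pos hinvne hFtop
    have hev : ∀ᶠ x in nhdsWithin 0 (Set.Ioi 0), h x < c := by
      have h0 : h 0 = 0 := (hzero 0).2 rfl
      have := hrc 0
      rw [h0] at this
      exact this.eventually_lt_const hcpos
    have hmem : Set.Ioc (0 : ℝ≥0∞) (((n : ℝ≥0∞) + 1)⁻¹) ∈ nhdsWithin 0 (Set.Ioi 0) :=
      Ioc_mem_nhdsGT_of_mem ⟨le_rfl, pos_iff_ne_zero.2 hinvne⟩
    obtain ⟨x, hxc, hx0, hxle⟩ := (hev.and (eventually_of_mem hmem fun _ hx => hx)).exists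
    have hx2 : 2 * (x / 2) = x := ENNReal.mul_div_cancel two_ne_zero ENNReal.ofNat_ne_top
    refine ⟨⟨⟨F0, hF0fin.isCompact⟩, hne⟩, ⟨F, x / 2, ?_, ?_, ?_, ?_⟩, ?_⟩
    · exact ENNReal.half_pos hx0.ne'
    · rw [hx2]
      exact hxle
    · rw [hx2]
      calc (F.card : ℝ≥0∞) * h x ≤ (F.card : ℝ≥0∞) * c :=
            mul_le_mul_right hxc.le _
        _ = ((n : ℝ≥0∞) + 1)⁻¹ := ENNReal.mul_div_cancel hFcard hFtop
    · intro y hy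
      have hyF : y ∈ F := hF0fin.mem_toFinset.2 hy
      exact Set.mem_biUnion hyF (EMetric.mem_ball_self (ENNReal.half_pos hx0.ne'))
    · calc edist K (⟨⟨F0, hF0fin.isCompact⟩, hne⟩ : NonemptyCompacts X)
          = EMetric.hausdorffEdist (K : Set X) F0 := rfl
        _ ≤ ε0 := by
            refine EMetric.hausdorffEdist_le_of_infEdist ?_ ?_
            · intro y hy
              obtain ⟨z, hz, hyz⟩ := Set.mem_iUnion₂.1 (hF0cov hy)
              exact (EMetric.infEdist_le_edist_of_mem hz).trans (EMetric.mem_ball.1 hyz).le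
            · intro z hz
              rw [EMetric.infEdist_zero_of_mem (hF0K hz)]
              exact zero_le
        _ < ε := hε0'
  have hsub : (⋂ n, U n) ⊆ {K : NonemptyCompacts X | Measure.mkMetric h (K : Set X) = 0} := by
    intro K hK
    simp only [Set.mem_setOf_eq]
    refine le_antisymm ?_ zero_le
    rw [Measure.mkMetric_apply]
    refine iSup₂_le fun r0 hr0 => ?_
    refine ENNReal.le_of_forall_pos_le_add fun ε hε _ => ?_
    rw [zero_add]
    have hminne : min r0 (ε : ℝ≥0∞) ≠ 0 := by
      simp only [Ne, min_eq_top, lt_min_iff]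
      exact (lt_min hr0 (by exact_mod_cast hε)).ne'
    obtain ⟨n, hn⟩ := ENNReal.exists_inv_nat_lt hminne
    have hn' : ((n : ℝ≥0∞) + 1)⁻¹ < min r0 (ε : ℝ≥0∞) :=
      lt_of_le_of_lt (ENNReal.inv_le_inv.2 (le_add_of_nonneg_right zero_le_one)) hn
    obtain ⟨F, r, hr, h2r, hcard, hcov⟩ := Set.mem_iInter.1 hK n
    set L : List X := F.toList with hL
    set t : ℕ → Set X := fun j =>
      if hj : j < L.length then EMetric.ball (L.get ⟨j, hj⟩) r else ∅ with ht
    have hdiam : ∀ j, EMetric.diam (t j) ≤ 2 * r := by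
      intro j
      by_cases hj : j < L.length
      · simp only [t, dif_pos hj]
        exact EMetric.diam_ball
      · simp [t, dif_neg hj, EMetric.diam]
    refine iInf₂_le_of_le t ?_ (iInf_le_of_le ?_ ?_)
    · intro y hy
      obtain ⟨z, hz, hyz⟩ := Set.mem_iUnion₂.1 (hcov hy)
      obtain ⟨i, hi⟩ := List.mem_iff_get.1 (Finset.mem_toList.2 hz)
      refine Set.mem_iUnion.2 ⟨i.1, ?_⟩
      rw [dif_pos i.2]
      simp only [Fin.eta, hi]
      exact hi ▸ hyz
    · intro j
      exact (hdiam j).trans (h2r.trans ((hn'.le.trans (min_le_left _ _))))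
    · have hzero' : ∀ j ∉ Finset.range L.length,
          (⨆ _ : (t j).Nonempty, h (EMetric.diam (t j))) = 0 := by
        intro j hj
        rw [Finset.mem_range, not_lt] at hj
        simp [t, dif_neg (not_lt.2 hj)]
      calc (∑' j, ⨆ _ : (t j).Nonempty, h (EMetric.diam (t j)))
          = ∑ j ∈ Finset.range L.length, ⨆ _ : (t j).Nonempty, h (EMetric.diam (t j)) :=
            tsum_eq_sum hzero'
        _ ≤ ∑ _j ∈ Finset.range L.length, h (2 * r) :=
            Finset.sum_le_sum fun j _ => iSup_le fun _ => hmono (hdiam j)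
        _ = (L.length : ℝ≥0∞) * h (2 * r) := by
            rw [Finset.sum_const, Finset.card_range, nsmul_eq_mul]
        _ = (F.card : ℝ≥0∞) * h (2 * r) := by rw [Finset.length_toList]
        _ ≤ ((n : ℝ≥0∞) + 1)⁻¹ := hcard
        _ ≤ (ε : ℝ≥0∞) := (hn'.trans_le (min_le_right _ _)).le
  exact mem_of_superset
    ((countable_iInter_mem.2 fun n => residual_of_dense_open (hopen n) (hdense n)))
    hsub
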